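/- For the BPR cost with ζ = 1, the per-user expected cost F_u(P_u) = Σ_i p_{u,i} Σ_e a_{e,i} t_e [1 + η (g_e + Σ_j a_{e,j} p_{u,j})/κ_e], with fixed nonnegative background flows g_e, constants t_e, κ_e > 0, η ≥ 0, and a_{e,i} ∈ {0,1}, is a convex function of p_u ∈ ℝ^{k_u} whenever each edge e belongs to at most 2 of the user's paths (Σ_i a_{e,i} ≤ 2). -/

import Mathlib

lemma convexOn_finset_sum' {ι α : Type*} [AddCommMonoid α] [Module ℝ α]
    (s : Finset ι) (f : ι → α → ℝ)
    (h : ∀ e ∈ s, ConvexOn ℝ Set.univ (f e)) :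
    ConvexOn ℝ Set.univ (fun p => ∑ e ∈ s, f e p) := by
  classical
  induction s using Finset.cons_induction with
  | empty => simpa using convexOn_const 0 convex_univ
  | cons e s he ih =>
    simp only [Finset.sum_cons]
    exact (h e (Finset.mem_cons_self e s)).add
      (ih fun e' he' => h e' (Finset.mem_cons_of_mem he'))

lemma convexOn_linear_plus_sq {k : ℕ} (c d : ℝ) (hd : 0 ≤ d) (w : Fin k → ℝ) :
    ConvexOn ℝ Set.univ (fun p : Fin k → ℝ =>
      c * (∑ j, w j * p j) + d * (∑ j, w j * p j) ^ 2) := by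
  have hlin : IsLinearMap ℝ (fun p : Fin k → ℝ => ∑ j, w j * p j) := by
    constructor
    · intro x y; simp [mul_add, Finset.sum_add_distrib]
    · intro c x; simp [Finset.mul_sum, mul_left_comm]
  set L : (Fin k → ℝ) →ₗ[ℝ] ℝ := hlin.mk' _
  have h1 : ConvexOn ℝ Set.univ (fun x : ℝ => c * x + d * x ^ 2) := by
    have hsq : ConvexOn ℝ Set.univ (fun x : ℝ => x ^ 2) :=
      (even_two).convexOn_pow
    have h2 : ConvexOn ℝ Set.univ (fun x : ℝ => d * x ^ 2) := hsq.smul hd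
    have h3 : ConvexOn ℝ Set.univ (fun x : ℝ => c * x) := by
      refine ⟨convex_univ, ?_⟩
      intro x _ y _ α β _ _ _
      simp only [smul_eq_mul]
      ring_nf
      exact le_of_eq (by ring)
    exact h3.add h2
  have := h1.comp_linearMap L
  exact this

/-- With affine BPR costs (`ζ = 1`), the per-user expected cost
`F_u(p) = ∑ i, p i * ∑ e, a e i * t e * (1 + η (g e + ∑ j, a e j * p j) / κ e)`
is convex in `p` whenever every edge belongs to at most two of the user's paths. -/
theorem per_user_cost_convex_of_edge_in_at_most_two_paths
    (E : Type*) [Fintype E] (k : ℕ)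
    (a : E → Fin k → ℝ) (ha : ∀ e i, a e i = 0 ∨ a e i = 1)
    (g : E → ℝ) (hg : ∀ e, 0 ≤ g e)
    (t κ : E → ℝ) (ht : ∀ e, 0 < t e) (hκ : ∀ e, 0 < κ e)
    (η : ℝ) (hη : 0 ≤ η)
    (htwo : ∀ e, ∑ i, a e i ≤ 2) :
    ConvexOn ℝ Set.univ (fun p : Fin k → ℝ =>
      ∑ i, p i * ∑ e, a e i * t e * (1 + η * (g e + ∑ j, a e j * p j) / κ e)) := by
  have hrw : ∀ p : Fin k → ℝ,
      (∑ i, p i * ∑ e, a e i * t e * (1 + η * (g e + ∑ j, a e j * p j) / κ e))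
      = ∑ e, ((t e * (1 + η * g e / κ e)) * (∑ j, a e j * p j)
          + (t e * η / κ e) * (∑ j, a e j * p j) ^ 2) := by
    intro p
    conv_lhs => simp only [Finset.mul_sum]
    rw [Finset.sum_comm]
    refine Finset.sum_congr rfl fun e _ => ?_
    have hκe := (hκ e).ne'
    have : ∀ i : Fin k, p i * (a e i * t e * (1 + η * (g e + ∑ j, a e j * p j) / κ e))
        = (a e i * p i) * (t e * (1 + η * (g e + ∑ j, a e j * p j) / κ e)) := by
      intro i; ring
    simp only [this]
    rw [← Finset.sum_mul]
    generalize (∑ j, a e j * p j) = S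
    field_simp
    ring
  simp only [hrw]
  apply convexOn_finset_sum'
  intro e _
  exact convexOn_linear_plus_sq _ _
    (div_nonneg (mul_nonneg (ht e).le hη) (hκ e).le) _
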